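/- Assume the semigroup possesses a compact (𝔹,Σ)-attracting set K ⊆ Φ. Then for every nonempty B ∈ 𝔹 the ω-limit set ω(B) is a nonempty compact subset of K. -/
import Mathlib


open Metric Filter Topology

noncomputable section

/-- The ω-limit set of a set `B` under the multi-parametric semigroup `S`
with time arrow `Sig`. -/
def omegaSet {m : ℕ} {Φ : Type*} [MetricSpace Φ]
    (S : EuclideanSpace ℝ (Fin m) → Φ → Φ) (Sig : Set (EuclideanSpace ℝ (Fin m)))
    (B : Set Φ) : Set Φ :=
  {u₀ | ∃ (h : ℕ → EuclideanSpace ℝ (Fin m)) (u : ℕ → Φ),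
    (∀ n, h n ∈ Sig) ∧
    Tendsto (fun n => infDist (h n) (frontier Sig)) atTop atTop ∧
    (∀ n, u n ∈ B) ∧
    Tendsto (fun n => S (h n) (u n)) atTop (𝓝 u₀)}

/-- `K` is a `(𝔹,Σ)`-attracting set for the semigroup `S`. -/
def IsAttractingSet {m : ℕ} {Φ : Type*} [MetricSpace Φ]
    (S : EuclideanSpace ℝ (Fin m) → Φ → Φ) (Sig : Set (EuclideanSpace ℝ (Fin m)))
    (Bor : Set (Set Φ)) (K : Set Φ) : Prop :=
  ∀ B ∈ Bor, ∀ ε : ℝ, 0 < ε → ∃ D : ℝ, 0 < D ∧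
    ∀ h ∈ Sig, infDist h (frontier Sig) ≥ D → S h '' B ⊆ thickening ε K

/-- If the semigroup possesses a compact `(𝔹,Σ)`-attracting set `K`, then for every
nonempty `B ∈ 𝔹` the ω-limit set `ω(B)` is a nonempty compact subset of `K`. -/
theorem omegaSet_nonempty_compact_subset
    {m : ℕ} {Φ : Type*} [MetricSpace Φ] (hm : 1 ≤ m)
    (C Sig : Set (EuclideanSpace ℝ (Fin m)))
    (S : EuclideanSpace ℝ (Fin m) → Φ → Φ) (Bor : Set (Set Φ))
    (hCclosed : IsClosed C) (hCint : (interior C).Nonempty)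
    (hC0 : (0 : EuclideanSpace ℝ (Fin m)) ∈ C)
    (hCadd : ∀ h₁ ∈ C, ∀ h₂ ∈ C, h₁ + h₂ ∈ C)
    (hCcone : ∀ t : ℝ, 0 ≤ t → ∀ h ∈ C, t • h ∈ C)
    (hS0 : S 0 = id)
    (hSadd : ∀ h₁ ∈ C, ∀ h₂ ∈ C, S (h₁ + h₂) = S h₁ ∘ S h₂)
    (hSigne : Sig.Nonempty) (hSigC : Sig ⊆ C)
    (hfr : frontier C ⊆ frontier Sig)
    (hcof : ∀ D : ℝ, 0 < D → ∃ h ∈ Sig, infDist h (frontier Sig) ≥ D)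
    (K : Set Φ) (hK : IsCompact K) (hKattr : IsAttractingSet S Sig Bor K)
    (B : Set Φ) (hB : B ∈ Bor) (hBne : B.Nonempty) :
    (omegaSet S Sig B).Nonempty ∧ IsCompact (omegaSet S Sig B) ∧ omegaSet S Sig B ⊆ K := by

  obtain ⟨b, hb⟩ := hBne
  -- Subset part
  have hsub : omegaSet S Sig B ⊆ K := by
    rintro u₀ ⟨h, u, hhS, hhd, huB, hconv⟩
    have hKne : K.Nonempty := by
      obtain ⟨D, hD, hDprop⟩ := hKattr B hB 1 one_pos
      obtain ⟨h0, h0S, h0d⟩ := hcof D hD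
      have := hDprop h0 h0S h0d ⟨b, hb, rfl⟩
      rw [mem_thickening_iff] at this
      obtain ⟨z, hz, _⟩ := this
      exact ⟨z, hz⟩
    have hle : ∀ ε : ℝ, 0 < ε → infDist u₀ K ≤ ε := by
      intro ε hε
      obtain ⟨D, hD, hDprop⟩ := hKattr B hB ε hε
      have hev : ∀ᶠ n in atTop, infDist (S (h n) (u n)) K ≤ ε := by
        filter_upwards [hhd.eventually_ge_atTop D] with n hn
        have := hDprop (h n) (hhS n) hn ⟨u n, huB n, rfl⟩
        rw [mem_thickening_iff] at this
        obtain ⟨z, hz, hdz⟩ := this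
        exact le_of_lt (lt_of_le_of_lt (infDist_le_dist_of_mem hz) hdz)
      have htend : Tendsto (fun n => infDist (S (h n) (u n)) K) atTop
          (𝓝 (infDist u₀ K)) := ((continuous_infDist_pt K).tendsto u₀).comp hconv
      exact le_of_tendsto htend hev
    have h0 : infDist u₀ K = 0 := by
      by_contra hne
      have hpos : 0 < infDist u₀ K := lt_of_le_of_ne infDist_nonneg (Ne.symm hne)
      have := hle (infDist u₀ K / 2) (by linarith)
      linarith
    exact (hK.isClosed.mem_iff_infDist_zero hKne).mpr h0
  -- Nonempty part
  have hne : (omegaSet S Sig B).Nonempty := by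
    have key : ∀ n : ℕ, ∃ h, h ∈ Sig ∧ infDist h (frontier Sig) ≥ (n : ℝ) + 1 ∧
        ∃ k, k ∈ K ∧ dist (S h b) k < 1 / ((n : ℝ) + 1) := by
      intro n
      obtain ⟨D, hD, hDprop⟩ := hKattr B hB (1 / ((n : ℝ) + 1)) (by positivity)
      obtain ⟨h, hhSig, hh⟩ := hcof (max D ((n : ℝ) + 1)) (lt_max_of_lt_left hD)
      refine ⟨h, hhSig, le_trans (le_max_right _ _) hh, ?_⟩
      have := hDprop h hhSig (le_trans (le_max_left _ _) hh) ⟨b, hb, rfl⟩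
      rw [mem_thickening_iff] at this
      obtain ⟨k, hk, hdist⟩ := this
      exact ⟨k, hk, hdist⟩
    choose h hhSig hhD k hkK hkdist using key
    obtain ⟨k₀, hk₀, φ, hφ, hconv⟩ := hK.tendsto_subseq hkK
    refine ⟨k₀, fun n => h (φ n), fun _ => b, fun n => hhSig (φ n), ?_, fun _ => hb, ?_⟩
    · apply tendsto_atTop_mono (fun n => ?_) tendsto_natCast_atTop_atTop
      calc (n : ℝ) ≤ (φ n : ℝ) := by exact_mod_cast hφ.le_apply
        _ ≤ (φ n : ℝ) + 1 := by linarith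
        _ ≤ infDist (h (φ n)) (frontier Sig) := hhD (φ n)
    · rw [tendsto_iff_dist_tendsto_zero]
      apply squeeze_zero (fun n => dist_nonneg)
        (fun n => dist_triangle (S (h (φ n)) b) (k (φ n)) k₀)
      have h1 : Tendsto (fun n => dist (S (h (φ n)) b) (k (φ n))) atTop (𝓝 0) := by
        apply squeeze_zero (fun n => dist_nonneg) (fun n => (hkdist (φ n)).le.trans ?_)
        · exact tendsto_one_div_add_atTop_nhds_zero_nat
        · apply one_div_le_one_div_of_le (by positivity)
          have : (n : ℝ) ≤ (φ n : ℝ) := by exact_mod_cast hφ.le_apply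
          linarith
      have h2 : Tendsto (fun n => dist (k (φ n)) k₀) atTop (𝓝 0) :=
        (tendsto_iff_dist_tendsto_zero).mp hconv
      simpa using h1.add h2
  -- Closedness, hence compactness
  have hclosed : IsClosed (omegaSet S Sig B) := by
    rw [← isSeqClosed_iff_isClosed]
    intro v u₀ hv hvu
    have key : ∀ j : ℕ, ∃ hh, hh ∈ Sig ∧ infDist hh (frontier Sig) ≥ (j : ℝ) ∧
        ∃ uu, uu ∈ B ∧ dist (S hh uu) (v j) < 1 / ((j : ℝ) + 1) := by
      intro j
      obtain ⟨h, u, hhS, hhd, huB, hconv⟩ := hv j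
      have hev : ∀ᶠ n in atTop, infDist (h n) (frontier Sig) ≥ (j : ℝ) ∧
          dist (S (h n) (u n)) (v j) < 1 / ((j : ℝ) + 1) :=
        (hhd.eventually_ge_atTop ((j : ℝ))).and
          ((tendsto_iff_dist_tendsto_zero.mp hconv).eventually
            (Filter.Tendsto.eventually_lt_const (by positivity) tendsto_id))
      obtain ⟨n, hn1, hn2⟩ := hev.exists
      exact ⟨h n, hhS n, hn1, u n, huB n, hn2⟩
    choose H HhS HhD U UuB Udist using key
    refine ⟨H, U, HhS, ?_, UuB, ?_⟩
    · exact tendsto_atTop_mono HhD tendsto_natCast_atTop_atTop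
    · rw [tendsto_iff_dist_tendsto_zero]
      apply squeeze_zero (fun n => dist_nonneg)
        (fun n => dist_triangle (S (H n) (U n)) (v n) u₀)
      have h1 : Tendsto (fun n => dist (S (H n) (U n)) (v n)) atTop (𝓝 0) :=
        squeeze_zero (fun n => dist_nonneg) (fun n => (Udist n).le)
          tendsto_one_div_add_atTop_nhds_zero_nat
      have h2 : Tendsto (fun n => dist (v n) u₀) atTop (𝓝 0) :=
        tendsto_iff_dist_tendsto_zero.mp hvu
      simpa using h1.add h2
  exact ⟨hne, hK.of_isClosed_subset hclosed hsub, hsub⟩
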